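/- Let n ≥ 1, d ≥ 2 and k ∈ {1,…,d−1} be integers, let p₁,…,pₙ ∈ ℝ^d, and let t > 1. Define the barrier objective G_t(X,y) := t·∑_{i=1}^n yᵢ − ∑_{i=1}^n ln(yᵢ² − ‖X pᵢ‖₂²) − ln det(X) − ln det(I_d − X) on the domain D of pairs (X,y) with X ∈ ℝ^{d×d} symmetric, trace(X) = d−k, 0 ≺ X ≺ I_d, and ‖X pᵢ‖₂ < yᵢ for every i. Suppose (X*, y*) ∈ D attains the infimum of G_t over D. Then for every (X,y) ∈ D, (t − 1)·∑_{i=1}^n y*ᵢ ≤ G_t(X, y). In particular, taking X₀ := ((d−k)/d)·I_d and y₀ with (y₀)ᵢ := √(‖X₀ pᵢ‖₂² + e), one obtains (t − 1)·∑_{i=1}^n y*ᵢ ≤ t·∑_{i=1}^n (y₀)ᵢ − n + 2d·ln d. -/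

import Mathlib

open Matrix

/-- The Euclidean (ℓ₂) norm of a vector in ℝ^d. -/
noncomputable def l2norm {d : ℕ} (u : Fin d → ℝ) : ℝ := Real.sqrt (∑ j, (u j) ^ 2)

/-- The barrier objective
`G_t(X,y) = t·∑ᵢ yᵢ − ∑ᵢ ln(yᵢ² − ‖X pᵢ‖₂²) − ln det X − ln det (I − X)`. -/
noncomputable def barrierG {n d : ℕ} (p : Fin n → Fin d → ℝ) (t : ℝ)
    (X : Matrix (Fin d) (Fin d) ℝ) (y : Fin n → ℝ) : ℝ :=
  t * ∑ i, y i - ∑ i, Real.log ((y i) ^ 2 - (l2norm (X.mulVec (p i))) ^ 2)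
    - Real.log X.det - Real.log (1 - X).det

/-- The domain `D` of the barrier problem: `X` symmetric with `trace X = d − k`,
`0 ≺ X ≺ I`, and `‖X pᵢ‖₂ < yᵢ` for every `i`. -/
def barrierDom {n d : ℕ} (k : ℕ) (p : Fin n → Fin d → ℝ)
    (X : Matrix (Fin d) (Fin d) ℝ) (y : Fin n → ℝ) : Prop :=
  Xᵀ = X ∧ X.trace = ((d - k : ℕ) : ℝ) ∧ X.PosDef ∧ (1 - X).PosDef ∧
    ∀ i, l2norm (X.mulVec (p i)) < y i

lemma trace_eq_sum_eigs {d : ℕ} {A : Matrix (Fin d) (Fin d) ℝ} (hA : A.IsHermitian) :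
    A.trace = ∑ i, hA.eigenvalues i := by
  nth_rewrite 1 [hA.spectral_theorem]
  rw [Unitary.conjStarAlgAut_apply, Matrix.trace_mul_cycle, Unitary.coe_star_mul_self, Matrix.one_mul]
  simp [Matrix.trace_diagonal]

lemma logdet_le {d : ℕ} {A : Matrix (Fin d) (Fin d) ℝ} (hA : A.IsHermitian) (hpd : A.PosDef) :
    Real.log A.det ≤ A.trace - d := by
  rw [hA.det_eq_prod_eigenvalues, trace_eq_sum_eigs hA]
  simp only [RCLike.ofReal_real_eq_id, id_eq]
  have hpos : ∀ i, (0:ℝ) < hA.eigenvalues i := fun i => hpd.eigenvalues_pos i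
  rw [Real.log_prod (fun i _ => (hpos i).ne')]
  have : ∀ i ∈ Finset.univ, Real.log (hA.eigenvalues i) ≤ hA.eigenvalues i - 1 :=
    fun i _ => Real.log_le_sub_one_of_pos (hpos i)
  calc ∑ i, Real.log (hA.eigenvalues i) ≤ ∑ i, (hA.eigenvalues i - 1) := Finset.sum_le_sum this
    _ = (∑ i, hA.eigenvalues i) - d := by simp [Finset.sum_sub_distrib]

lemma two_log_le {y : ℝ} (hy : 0 < y) : 2 * Real.log y ≤ y := by
  have hs : Real.sqrt y > 0 := Real.sqrt_pos.mpr hy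
  have h1 : Real.log (Real.sqrt y) ≤ Real.sqrt y - 1 := Real.log_le_sub_one_of_pos hs
  have h2 : Real.log (Real.sqrt y) = Real.log y / 2 := Real.log_sqrt hy.le
  nlinarith [sq_nonneg (Real.sqrt y - 2), Real.sq_sqrt hy.le]

lemma key_lemma {n d k : ℕ} (hkd : k ≤ d) (p : Fin n → Fin d → ℝ) {t : ℝ}
    {X : Matrix (Fin d) (Fin d) ℝ} {y : Fin n → ℝ} (h : barrierDom k p X y) :
    (t - 1) * ∑ i, y i ≤ barrierG p t X y := by
  obtain ⟨hsym, htr, hpd, hpd1, hlt⟩ := h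
  -- log det X ≤ 0
  have h1 : Real.log X.det ≤ 0 := by
    have := logdet_le hpd.1 hpd
    rw [htr] at this
    have hle : ((d - k : ℕ) : ℝ) ≤ (d : ℝ) := by exact_mod_cast Nat.sub_le d k
    linarith
  have h2 : Real.log (1 - X).det ≤ 0 := by
    have := logdet_le hpd1.1 hpd1
    have htr1 : (1 - X).trace = (d : ℝ) - ((d - k : ℕ) : ℝ) := by
      rw [Matrix.trace_sub, Matrix.trace_one, htr]
      simp
    rw [htr1] at this
    have : Real.log (1 - X).det ≤ -((d - k : ℕ) : ℝ) := by linarith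
    have hnn : (0:ℝ) ≤ ((d - k : ℕ) : ℝ) := Nat.cast_nonneg _
    linarith
  -- each log term ≤ y i
  have h3 : ∀ i ∈ Finset.univ,
      Real.log ((y i) ^ 2 - (l2norm (X.mulVec (p i))) ^ 2) ≤ y i := by
    intro i _
    set s := l2norm (X.mulVec (p i)) with hs
    have hsnn : 0 ≤ s := Real.sqrt_nonneg _
    have hy : 0 < y i := lt_of_le_of_lt hsnn (hlt i)
    have hpos : 0 < (y i) ^ 2 - s ^ 2 := by nlinarith [hlt i]
    have hle : (y i) ^ 2 - s ^ 2 ≤ (y i) ^ 2 := by nlinarith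
    calc Real.log ((y i) ^ 2 - s ^ 2) ≤ Real.log ((y i) ^ 2) := by
          exact Real.log_le_log hpos hle
      _ = 2 * Real.log (y i) := by rw [Real.log_pow]; push_cast; ring
      _ ≤ y i := two_log_le hy
  have h4 : ∑ i, Real.log ((y i) ^ 2 - (l2norm (X.mulVec (p i))) ^ 2) ≤ ∑ i, y i :=
    Finset.sum_le_sum h3
  unfold barrierG
  linarith

/-- If `t > 1` and `(X*, y*) ∈ D` attains the infimum of `G_t` over `D`,
then for every `(X,y) ∈ D`, `(t−1)·∑ᵢ y*ᵢ ≤ G_t(X,y)`; in particular, with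
`X₀ := ((d−k)/d)·I` and `(y₀)ᵢ := √(‖X₀ pᵢ‖₂² + e)` one obtains
`(t−1)·∑ᵢ y*ᵢ ≤ t·∑ᵢ (y₀)ᵢ − n + 2d·ln d`. -/
theorem stmt_14 (n d k : ℕ) (hn : 1 ≤ n) (hd : 2 ≤ d) (hk1 : 1 ≤ k) (hk2 : k ≤ d - 1)
    (p : Fin n → Fin d → ℝ) (t : ℝ) (ht : 1 < t)
    (Xstar : Matrix (Fin d) (Fin d) ℝ) (ystar : Fin n → ℝ)
    (hfeas : barrierDom k p Xstar ystar)
    (hmin : ∀ (X : Matrix (Fin d) (Fin d) ℝ) (y : Fin n → ℝ),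
      barrierDom k p X y → barrierG p t Xstar ystar ≤ barrierG p t X y)
    (X₀ : Matrix (Fin d) (Fin d) ℝ)
    (hX₀ : X₀ = (((d : ℝ) - k) / d) • (1 : Matrix (Fin d) (Fin d) ℝ))
    (y₀ : Fin n → ℝ)
    (hy₀ : ∀ i, y₀ i = Real.sqrt ((l2norm (X₀.mulVec (p i))) ^ 2 + Real.exp 1)) :
    (∀ (X : Matrix (Fin d) (Fin d) ℝ) (y : Fin n → ℝ),
      barrierDom k p X y → (t - 1) * ∑ i, ystar i ≤ barrierG p t X y) ∧
    (t - 1) * ∑ i, ystar i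
      ≤ t * ∑ i, y₀ i - (n : ℝ) + 2 * (d : ℝ) * Real.log d := by
  have hkd : k ≤ d := le_trans hk2 (Nat.sub_le d 1)
  have part1 : ∀ (X : Matrix (Fin d) (Fin d) ℝ) (y : Fin n → ℝ),
      barrierDom k p X y → (t - 1) * ∑ i, ystar i ≤ barrierG p t X y := by
    intro X y hXy
    exact le_trans (key_lemma hkd p hfeas) (hmin X y hXy)
  refine ⟨part1, ?_⟩
  -- set up scalars
  have hd0 : (0:ℝ) < d := by
    have : 0 < d := lt_of_lt_of_le (by norm_num) hd
    exact_mod_cast this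
  set c : ℝ := ((d : ℝ) - k) / d with hc_def
  have hk_le : (k:ℝ) ≤ (d:ℝ) - 1 := by
    have h' : (k:ℝ) ≤ ((d-1:ℕ):ℝ) := by exact_mod_cast hk2
    rwa [Nat.cast_sub (le_trans (by norm_num) hd), Nat.cast_one] at h'
  have hk1' : (1:ℝ) ≤ k := by exact_mod_cast hk1
  have hdk1 : (1:ℝ) ≤ (d:ℝ) - k := by linarith
  have hc_pos : 0 < c := by
    apply div_pos (by linarith) hd0
  have hc_lt1 : c < 1 := by
    rw [hc_def, div_lt_one hd0]
    linarith
  have h1c_pos : 0 < 1 - c := by linarith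
  have hX₀eq : X₀ = Matrix.diagonal (fun _ : Fin d => c) := by
    rw [hX₀, Matrix.smul_one_eq_diagonal]
  have h1X₀eq : 1 - X₀ = Matrix.diagonal (fun _ : Fin d => 1 - c) := by
    rw [hX₀, ← Matrix.smul_one_eq_diagonal, sub_smul, one_smul]
  have hc_eq : c * d = (d:ℝ) - k := by
    rw [hc_def]; field_simp
  have h1c_eq : (1 - c) * d = (k:ℝ) := by
    have : (1 - c) * d = d - c * d := by ring
    rw [this, hc_eq]; ring
  have hdom₀ : barrierDom k p X₀ y₀ := by
    refine ⟨?_, ?_, ?_, ?_, ?_⟩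
    · rw [hX₀eq, Matrix.diagonal_transpose]
    · rw [hX₀eq, Matrix.trace_diagonal]
      rw [Nat.cast_sub hkd]
      simp only [Finset.sum_const, Finset.card_univ, Fintype.card_fin, nsmul_eq_mul]
      rw [mul_comm]
      exact hc_eq
    · rw [hX₀eq]; exact Matrix.PosDef.diagonal (fun _ => hc_pos)
    · rw [h1X₀eq]; exact Matrix.PosDef.diagonal (fun _ => h1c_pos)
    · intro i
      rw [hy₀ i]
      have hsnn : 0 ≤ l2norm (X₀.mulVec (p i)) := Real.sqrt_nonneg _
      calc l2norm (X₀.mulVec (p i))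
          = Real.sqrt ((l2norm (X₀.mulVec (p i)))^2) := (Real.sqrt_sq hsnn).symm
        _ < Real.sqrt ((l2norm (X₀.mulVec (p i)))^2 + Real.exp 1) :=
            Real.sqrt_lt_sqrt (sq_nonneg _) (by linarith [Real.exp_pos 1])
  have hGle : barrierG p t X₀ y₀ ≤ t * ∑ i, y₀ i - (n:ℝ) + 2 * (d:ℝ) * Real.log d := by
    have hsum : ∑ i, Real.log ((y₀ i)^2 - (l2norm (X₀.mulVec (p i)))^2) = (n:ℝ) := by
      have hterm : ∀ i ∈ Finset.univ,
          Real.log ((y₀ i)^2 - (l2norm (X₀.mulVec (p i)))^2) = 1 := by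
        intro i _
        have h2 : (y₀ i)^2 = (l2norm (X₀.mulVec (p i)))^2 + Real.exp 1 := by
          rw [hy₀ i, Real.sq_sqrt (by positivity)]
        rw [h2]
        simp [Real.log_exp]
      rw [Finset.sum_congr rfl hterm]
      simp
    have hdet1 : Real.log X₀.det = (d:ℝ) * Real.log c := by
      rw [hX₀eq, Matrix.det_diagonal, Finset.prod_const, Finset.card_univ,
        Fintype.card_fin, Real.log_pow]
    have hdet2 : Real.log (1 - X₀).det = (d:ℝ) * Real.log (1 - c) := by
      rw [h1X₀eq, Matrix.det_diagonal, Finset.prod_const, Finset.card_univ,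
        Fintype.card_fin, Real.log_pow]
    have hlog : 0 ≤ Real.log c + Real.log (1 - c) + 2 * Real.log d := by
      have hprod : Real.log c + Real.log (1-c) + 2 * Real.log d
          = Real.log (c * (1-c) * (d:ℝ)^2) := by
        rw [Real.log_mul (by positivity) (by positivity),
          Real.log_mul hc_pos.ne' h1c_pos.ne', Real.log_pow]
        push_cast; ring
      rw [hprod]
      apply Real.log_nonneg
      nlinarith
    unfold barrierG
    rw [hsum, hdet1, hdet2]
    nlinarith [mul_nonneg hd0.le hlog]
  exact le_trans (part1 X₀ y₀ hdom₀) hGle
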